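/- Let Ω be the 2D flat torus, q ≥ 2, K(r) = r + r^{q+1}/(q+1), and θ₁, θ₂ ∈ L^{q+2}(Ω) nonnegative with θ := θ₁ - θ₂. Then ⟨K(θ₁) - K(θ₂), θ - θ_Ω⟩ ≥ (1/2)‖θ - θ_Ω‖_{L²}² - c θ_Ω², where θ_Ω = ∫_Ω θ is the spatial mean (|Ω| = 1), and c depends only on q and on bounds for ‖θᵢ‖_{L^p} for finite p. -/

import Mathlib

open MeasureTheory

noncomputable section

/-- The unit periodicity cell of the 2D flat torus. -/
def Qd : Set (ℝ × ℝ) := Set.Icc (0:ℝ) 1 ×ˢ Set.Icc (0:ℝ) 1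

/-- `Ω`-periodicity (period 1 in each variable). -/
def PerF {E : Type*} (v : ℝ × ℝ → E) : Prop :=
  ∀ x : ℝ × ℝ, v (x.1 + 1, x.2) = v x ∧ v (x.1, x.2 + 1) = v x

/-- Spatial mean over the torus (`|Ω| = 1`). -/
def meanQ (v : ℝ × ℝ → ℝ) : ℝ := ∫ x in Qd, v x

/-- Squared `L²` norm. -/
def l2sqQ (v : ℝ × ℝ → ℝ) : ℝ := ∫ x in Qd, (v x) ^ 2

/-- Squared `L²` norm of the gradient. -/
def gradsqQ (v : ℝ × ℝ → ℝ) : ℝ := ∫ x in Qd, ‖fderiv ℝ v x‖ ^ 2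

/-- Squared `H¹` norm. -/
def h1sqQ (v : ℝ × ℝ → ℝ) : ℝ := l2sqQ v + gradsqQ v

/-- Squared `H²` norm. -/
def h2sqQ (v : ℝ × ℝ → ℝ) : ℝ := h1sqQ v + ∫ x in Qd, ‖iteratedFDeriv ℝ 2 v x‖ ^ 2

/-- Laplacian on `ℝ²`. -/
def lapQ (v : ℝ × ℝ → ℝ) (x : ℝ × ℝ) : ℝ :=
  fderiv ℝ (fun y => fderiv ℝ v y (1, 0)) x (1, 0)
  + fderiv ℝ (fun y => fderiv ℝ v y (0, 1)) x (0, 1)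

/-- The temperature nonlinearity `K(r) = r + r^{q+1}/(q+1)`. -/
def Kfun (q r : ℝ) : ℝ := r + r ^ (q + 1) / (q + 1)

lemma alg_aux (φ m s t N d : ℝ) (hs0 : 0 ≤ s) (hst : s ^ 2 ≤ 2 * t)
    (hNd : 0 ≤ N * d) (hNabs : |N| ≤ s * |d|) (hdm : d = φ + m) :
    (1 / 2) * φ ^ 2 + m * φ - m ^ 2 * (t + s) ≤ (d + N) * φ := by
  have hdφ : |d| ≤ |φ| + |m| := hdm ▸ abs_add_le φ m
  have hNφ : -(|m| * s * |φ| + |m| * |m| * s) ≤ N * φ := by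
    have h1 : N * φ = N * d - m * N := by rw [hdm]; ring
    have h2 : m * N ≤ |m| * |N| := by rw [← abs_mul]; exact le_abs_self _
    have h3 : |m| * |N| ≤ |m| * (s * (|φ| + |m|)) := by
      apply mul_le_mul_of_nonneg_left _ (abs_nonneg m)
      calc |N| ≤ s * |d| := hNabs
        _ ≤ s * (|φ| + |m|) := mul_le_mul_of_nonneg_left hdφ hs0
    nlinarith
  have h4 : (|m| * s) ^ 2 = m ^ 2 * s ^ 2 := by rw [mul_pow, sq_abs]
  have amgm : |m| * s * |φ| ≤ (1 / 2) * φ ^ 2 + (1 / 2) * m ^ 2 * s ^ 2 := by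
    nlinarith [sq_nonneg (|φ| - |m| * s), sq_abs φ, h4]
  have h5 : m ^ 2 * s ^ 2 ≤ m ^ 2 * (2 * t) := mul_le_mul_of_nonneg_left hst (sq_nonneg m)
  have hms : |m| * |m| * s = m ^ 2 * s := by rw [← sq_abs m]; ring
  have expand : (d + N) * φ = φ ^ 2 + m * φ + N * φ := by rw [hdm]; ring
  rw [expand]
  linarith [sq_nonneg φ]

lemma rpow_sub_rpow_le_aux (p : ℝ) (hp : 1 ≤ p) {a b : ℝ} (hb : 0 ≤ b) (hba : b ≤ a) :
    a ^ p - b ^ p ≤ p * a ^ (p - 1) * (a - b) := by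
  rcases eq_or_lt_of_le hba with h | h
  · subst h; simp
  · obtain ⟨c, hc, hceq⟩ := exists_hasDerivAt_eq_slope (fun x => x ^ p)
      (fun x => p * x ^ (p - 1)) h
      (fun x _ => (Real.continuousAt_rpow_const x p (Or.inr (by linarith))).continuousWithinAt)
      (fun x _ => Real.hasDerivAt_rpow_const (Or.inr hp))
    have hc0 : 0 ≤ c := le_trans hb hc.1.le
    have hslope : p * c ^ (p - 1) ≤ p * a ^ (p - 1) := by
      have := Real.rpow_le_rpow hc0 hc.2.le (by linarith : (0:ℝ) ≤ p - 1)
      nlinarith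
    have hab : 0 < a - b := by linarith
    have hkey : (a ^ p - b ^ p) / (a - b) ≤ p * a ^ (p - 1) := by rw [← hceq]; exact hslope
    calc a ^ p - b ^ p = (a ^ p - b ^ p) / (a - b) * (a - b) := by field_simp
      _ ≤ p * a ^ (p - 1) * (a - b) := mul_le_mul_of_nonneg_right hkey hab.le

lemma abs_rpow_sub_rpow_le (q : ℝ) (hq : 2 ≤ q) {a b : ℝ} (ha : 0 ≤ a) (hb : 0 ≤ b) :
    |a ^ (q + 1) - b ^ (q + 1)| ≤ (q + 1) * (a ^ q + b ^ q) * |a - b| := by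
  have hbnd : ∀ x y : ℝ, 0 ≤ x → 0 ≤ y → y ≤ x →
      |x ^ (q + 1) - y ^ (q + 1)| ≤ (q + 1) * (x ^ q + y ^ q) * |x - y| := by
    intro x y hx hy hyx
    have h1 : x ^ (q + 1) - y ^ (q + 1) ≤ (q + 1) * x ^ (q + 1 - 1) * (x - y) :=
      rpow_sub_rpow_le_aux (q + 1) (by linarith) hy hyx
    have h2 : y ^ (q + 1) ≤ x ^ (q + 1) := Real.rpow_le_rpow hy hyx (by linarith)
    have hx' : x ^ (q + 1 - 1) = x ^ q := by norm_num
    rw [hx'] at h1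
    have hyq : (0:ℝ) ≤ (q + 1) * y ^ q * (x - y) :=
      mul_nonneg (mul_nonneg (by linarith) (Real.rpow_nonneg hy q)) (by linarith)
    rw [abs_of_nonneg (by linarith), abs_of_nonneg (by linarith)]
    nlinarith
  rcases le_total b a with h | h
  · exact hbnd a b ha hb h
  · have := hbnd b a hb ha h
    rwa [abs_sub_comm, abs_sub_comm a b, add_comm (a ^ q)]

lemma Kfun_ptwise (q : ℝ) (hq : 2 ≤ q) (m a b : ℝ) (ha : 0 ≤ a) (hb : 0 ≤ b) :
    (1 / 2) * ((a - b) - m) ^ 2 + m * ((a - b) - m)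
      - m ^ 2 * ((a ^ (2 * q) + b ^ (2 * q)) + (a ^ q + b ^ q)) ≤
    (Kfun q a - Kfun q b) * ((a - b) - m) := by
  have hq1 : (0:ℝ) < q + 1 := by linarith
  have hK : Kfun q a - Kfun q b = ((a - b) + (a ^ (q + 1) - b ^ (q + 1)) / (q + 1)) := by
    simp only [Kfun]; field_simp; ring
  rw [hK]
  have hs0 : 0 ≤ a ^ q + b ^ q :=
    add_nonneg (Real.rpow_nonneg ha q) (Real.rpow_nonneg hb q)
  have hst : (a ^ q + b ^ q) ^ 2 ≤ 2 * (a ^ (2 * q) + b ^ (2 * q)) := by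
    have h1 : a ^ (2 * q) = (a ^ q) ^ 2 := by
      rw [mul_comm, Real.rpow_mul ha q 2, ← Real.rpow_natCast (a ^ q) 2]; norm_num
    have h2 : b ^ (2 * q) = (b ^ q) ^ 2 := by
      rw [mul_comm, Real.rpow_mul hb q 2, ← Real.rpow_natCast (b ^ q) 2]; norm_num
    rw [h1, h2]; nlinarith [sq_nonneg (a ^ q - b ^ q)]
  have hNd : 0 ≤ (a ^ (q + 1) - b ^ (q + 1)) / (q + 1) * (a - b) := by
    rcases le_total b a with h | h
    · have h2 : b ^ (q + 1) ≤ a ^ (q + 1) := Real.rpow_le_rpow hb h (by linarith)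
      exact mul_nonneg (div_nonneg (by linarith) hq1.le) (by linarith)
    · have h2 : a ^ (q + 1) ≤ b ^ (q + 1) := Real.rpow_le_rpow ha h (by linarith)
      have hN0 : (a ^ (q + 1) - b ^ (q + 1)) / (q + 1) ≤ 0 :=
        div_nonpos_of_nonpos_of_nonneg (by linarith) hq1.le
      nlinarith
  have hNabs : |(a ^ (q + 1) - b ^ (q + 1)) / (q + 1)| ≤ (a ^ q + b ^ q) * |a - b| := by
    rw [abs_div, abs_of_pos hq1, div_le_iff₀ hq1]
    calc |a ^ (q + 1) - b ^ (q + 1)| ≤ (q + 1) * (a ^ q + b ^ q) * |a - b| :=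
          abs_rpow_sub_rpow_le q hq ha hb
      _ = (a ^ q + b ^ q) * |a - b| * (q + 1) := by ring
  exact alg_aux ((a - b) - m) m (a ^ q + b ^ q) (a ^ (2 * q) + b ^ (2 * q))
    ((a ^ (q + 1) - b ^ (q + 1)) / (q + 1)) (a - b) hs0 hst hNd hNabs (by ring)

/-- Coercivity of the difference of the temperature nonlinearity against the mean-free
part of the temperature difference: for `q ≥ 2` and nonnegative `θ₁, θ₂` bounded by `B`
in every `L^p`, `p ∈ [1,∞)`, one has
`⟨K(θ₁) - K(θ₂), θ - θ_Ω⟩ ≥ (1/2)‖θ - θ_Ω‖² - c θ_Ω²` with `c = c(q,B) > 0`. -/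
theorem K_diff_coercive (q B : ℝ) (hq : 2 ≤ q) (hB : 0 < B) :
    ∃ c : ℝ, 0 < c ∧ ∀ θ₁ θ₂ : ℝ × ℝ → ℝ,
      Continuous θ₁ → Continuous θ₂ → PerF θ₁ → PerF θ₂ →
      (∀ x, 0 ≤ θ₁ x) → (∀ x, 0 ≤ θ₂ x) →
      (∀ p : ℝ, 1 ≤ p → (∫ x in Qd, θ₁ x ^ p) ≤ B ^ p) →
      (∀ p : ℝ, 1 ≤ p → (∫ x in Qd, θ₂ x ^ p) ≤ B ^ p) →
      (∫ x in Qd, (Kfun q (θ₁ x) - Kfun q (θ₂ x)) *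
          ((θ₁ x - θ₂ x) - meanQ (fun y => θ₁ y - θ₂ y))) ≥
        (1 / 2) * l2sqQ (fun x => (θ₁ x - θ₂ x) - meanQ (fun y => θ₁ y - θ₂ y)) -
          c * (meanQ (fun y => θ₁ y - θ₂ y)) ^ 2 := by
  refine ⟨2 * B ^ (2 * q) + 2 * B ^ q, by positivity, ?_⟩
  intro θ₁ θ₂ hc1 hc2 _ _ h01 h02 hL1 hL2
  have hQc : IsCompact Qd := isCompact_Icc.prod isCompact_Icc
  have hQm : MeasurableSet Qd := measurableSet_Icc.prod measurableSet_Icc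
  have hvol : (volume Qd).toReal = 1 := by
    rw [Qd, show (volume : Measure (ℝ × ℝ)) = (volume : Measure ℝ).prod volume from rfl,
      Measure.prod_prod, Real.volume_Icc]
    norm_num
  have hcθ : Continuous fun x : ℝ × ℝ => θ₁ x - θ₂ x := hc1.sub hc2
  have hc1p : ∀ p : ℝ, 0 < p → Continuous fun x => θ₁ x ^ p := fun p hp =>
    hc1.rpow_const fun x => Or.inr hp.le
  have hc2p : ∀ p : ℝ, 0 < p → Continuous fun x => θ₂ x ^ p := fun p hp =>
    hc2.rpow_const fun x => Or.inr hp.le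
  generalize hm : meanQ (fun y => θ₁ y - θ₂ y) = m
  have hmdef : ∫ x in Qd, (θ₁ x - θ₂ x) = m := by rw [← hm]; simp [meanQ]
  -- integrability facts
  have intθ : IntegrableOn (fun x => θ₁ x - θ₂ x) Qd := hcθ.continuousOn.integrableOn_compact hQc
  have intφ : IntegrableOn (fun x => (θ₁ x - θ₂ x) - m) Qd :=
    (hcθ.sub continuous_const).continuousOn.integrableOn_compact hQc
  have intφ2 : IntegrableOn (fun x => ((θ₁ x - θ₂ x) - m) ^ 2) Qd :=
    (((hcθ.sub continuous_const).pow 2)).continuousOn.integrableOn_compact hQc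
  have hcg : Continuous fun x => (θ₁ x ^ (2 * q) + θ₂ x ^ (2 * q)) + (θ₁ x ^ q + θ₂ x ^ q) :=
    ((hc1p (2 * q) (by linarith)).add (hc2p (2 * q) (by linarith))).add
      ((hc1p q (by linarith)).add (hc2p q (by linarith)))
  have intg : IntegrableOn
      (fun x => (θ₁ x ^ (2 * q) + θ₂ x ^ (2 * q)) + (θ₁ x ^ q + θ₂ x ^ q)) Qd :=
    hcg.continuousOn.integrableOn_compact hQc
  have intK : IntegrableOn
      (fun x => (Kfun q (θ₁ x) - Kfun q (θ₂ x)) * ((θ₁ x - θ₂ x) - m)) Qd := by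
    have hcK : Continuous fun x => (Kfun q (θ₁ x) - Kfun q (θ₂ x)) * ((θ₁ x - θ₂ x) - m) := by
      have h1 : Continuous fun x => Kfun q (θ₁ x) := by
        simp only [Kfun]
        exact hc1.add ((hc1p (q + 1) (by linarith)).div_const _)
      have h2 : Continuous fun x => Kfun q (θ₂ x) := by
        simp only [Kfun]
        exact hc2.add ((hc2p (q + 1) (by linarith)).div_const _)
      exact (h1.sub h2).mul (hcθ.sub continuous_const)
    exact hcK.continuousOn.integrableOn_compact hQc
  have intG : IntegrableOn (fun x =>
      (1 / 2) * ((θ₁ x - θ₂ x) - m) ^ 2 + m * ((θ₁ x - θ₂ x) - m)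
        - m ^ 2 * ((θ₁ x ^ (2 * q) + θ₂ x ^ (2 * q)) + (θ₁ x ^ q + θ₂ x ^ q))) Qd :=
    ((intφ2.const_mul _).add (intφ.const_mul _)).sub (intg.const_mul _)
  -- pointwise comparison
  have key : ∫ x in Qd, (1 / 2) * ((θ₁ x - θ₂ x) - m) ^ 2 + m * ((θ₁ x - θ₂ x) - m)
        - m ^ 2 * ((θ₁ x ^ (2 * q) + θ₂ x ^ (2 * q)) + (θ₁ x ^ q + θ₂ x ^ q)) ≤
      ∫ x in Qd, (Kfun q (θ₁ x) - Kfun q (θ₂ x)) * ((θ₁ x - θ₂ x) - m) :=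
    setIntegral_mono_on intG intK hQm fun x _ => Kfun_ptwise q hq m _ _ (h01 x) (h02 x)
  -- compute the lower integral
  have hφ0 : ∫ x in Qd, ((θ₁ x - θ₂ x) - m) = 0 := by
    rw [integral_sub intθ (continuous_const.continuousOn.integrableOn_compact hQc),
      setIntegral_const, measureReal_def, hvol, hmdef]
    simp
  have hsplit : ∫ x in Qd, ((1 / 2) * ((θ₁ x - θ₂ x) - m) ^ 2 + m * ((θ₁ x - θ₂ x) - m)
        - m ^ 2 * ((θ₁ x ^ (2 * q) + θ₂ x ^ (2 * q)) + (θ₁ x ^ q + θ₂ x ^ q))) =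
      (1 / 2) * (∫ x in Qd, ((θ₁ x - θ₂ x) - m) ^ 2)
        - m ^ 2 * ∫ x in Qd, ((θ₁ x ^ (2 * q) + θ₂ x ^ (2 * q)) + (θ₁ x ^ q + θ₂ x ^ q)) := by
    have i1 : IntegrableOn (fun x => (1 / 2) * ((θ₁ x - θ₂ x) - m) ^ 2) Qd :=
      intφ2.const_mul _
    have i2 : IntegrableOn (fun x => m * ((θ₁ x - θ₂ x) - m)) Qd := intφ.const_mul _
    have i12 : IntegrableOn (fun x => (1 / 2) * ((θ₁ x - θ₂ x) - m) ^ 2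
        + m * ((θ₁ x - θ₂ x) - m)) Qd := i1.add i2
    have i3 : IntegrableOn (fun x =>
        m ^ 2 * ((θ₁ x ^ (2 * q) + θ₂ x ^ (2 * q)) + (θ₁ x ^ q + θ₂ x ^ q))) Qd :=
      intg.const_mul _
    rw [integral_sub i12 i3, integral_add i1 i2,
      integral_const_mul, integral_const_mul, integral_const_mul, hφ0]
    ring
  -- bound the g-integral
  have intp1 : ∀ p : ℝ, 0 < p → IntegrableOn (fun x => θ₁ x ^ p) Qd := fun p hp =>
    (hc1p p hp).continuousOn.integrableOn_compact hQc
  have intp2 : ∀ p : ℝ, 0 < p → IntegrableOn (fun x => θ₂ x ^ p) Qd := fun p hp =>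
    (hc2p p hp).continuousOn.integrableOn_compact hQc
  have hg : ∫ x in Qd, ((θ₁ x ^ (2 * q) + θ₂ x ^ (2 * q)) + (θ₁ x ^ q + θ₂ x ^ q)) ≤
      2 * B ^ (2 * q) + 2 * B ^ q := by
    have j1 : IntegrableOn (fun x => θ₁ x ^ (2 * q) + θ₂ x ^ (2 * q)) Qd :=
      (intp1 (2 * q) (by linarith)).add (intp2 (2 * q) (by linarith))
    have j2 : IntegrableOn (fun x => θ₁ x ^ q + θ₂ x ^ q) Qd :=
      (intp1 q (by linarith)).add (intp2 q (by linarith))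
    rw [integral_add j1 j2,
      integral_add (intp1 (2 * q) (by linarith)) (intp2 (2 * q) (by linarith)),
      integral_add (intp1 q (by linarith)) (intp2 q (by linarith))]
    have b1 := hL1 (2 * q) (by linarith)
    have b2 := hL2 (2 * q) (by linarith)
    have b3 := hL1 q (by linarith)
    have b4 := hL2 q (by linarith)
    linarith
  have hg2 : m ^ 2 * (∫ x in Qd, ((θ₁ x ^ (2 * q) + θ₂ x ^ (2 * q)) + (θ₁ x ^ q + θ₂ x ^ q)))
      ≤ m ^ 2 * (2 * B ^ (2 * q) + 2 * B ^ q) := mul_le_mul_of_nonneg_left hg (sq_nonneg m)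
  simp only [l2sqQ, ge_iff_le]
  linarith [key, hsplit, hg2]
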